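/- Let V be a matricial operator system inside Matrix (Fin d) (Fin d) ℂ, let B be a finite-dimensional C*-algebra, and let i : V → B be a unital complete order embedding that has the extension property and is rigid. If Φ : ℝ≥0 → (V →ₗ[ℂ] V) satisfies Φ(0) = id, Φ(s+t) = Φ(s) ∘ Φ(t) for all s,t ≥ 0, each Φ(t) is unital completely positive, and t ↦ Φ(t) is continuous in operator norm, then there exists Ψ : ℝ≥0 → (B →ₗ[ℂ] B) with Ψ(0) = id, Ψ(s+t) = Ψ(s) ∘ Ψ(t), each Ψ(t) unital completely positive, t ↦ Ψ(t) continuous in operator norm, and Ψ(t) ∘ i = i ∘ Φ(t) for all t ≥ 0. -/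

import Mathlib

open scoped NNReal ComplexOrder

/-- The `(n*d) × (n*d)` block complex matrix associated to an `n × n` matrix whose entries
are `d × d` complex matrices. -/
def blockMat {n d : ℕ} (M : Fin n → Fin n → Matrix (Fin d) (Fin d) ℂ) :
    Matrix (Fin n × Fin d) (Fin n × Fin d) ℂ :=
  Matrix.of fun p q => M p.1 q.1 p.2 q.2

/-- An `n × n` matrix with entries in a subspace `V` of `d × d` complex matrices is positive if
the associated block complex matrix is positive semidefinite. -/
def PosOverV {d : ℕ} {V : Submodule ℂ (Matrix (Fin d) (Fin d) ℂ)} {n : ℕ}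
    (M : Fin n → Fin n → V) : Prop :=
  (blockMat fun k l => (M k l : Matrix (Fin d) (Fin d) ℂ)).PosSemidef

/-- Positivity of an element of the `n × n` matrices over a C*-algebra `B`: it is positive
iff it factors as `star y * y`. -/
def PosOverB {B : Type*} [Ring B] [StarRing B] {n : ℕ}
    (x : Matrix (Fin n) (Fin n) B) : Prop :=
  ∃ y : Matrix (Fin n) (Fin n) B, x = star y * y

section Defs

variable {d : ℕ} (V : Submodule ℂ (Matrix (Fin d) (Fin d) ℂ))
variable (B : Type*) [NormedRing B] [StarRing B] [CStarRing B] [NormedAlgebra ℂ B]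
  [CompleteSpace B] [StarModule ℂ B]

/-- A linear map on a matricial operator system `V` is unital completely positive. -/
def IsUCPVV (h1 : (1 : Matrix (Fin d) (Fin d) ℂ) ∈ V) (φ : V →ₗ[ℂ] V) : Prop :=
  φ ⟨1, h1⟩ = ⟨1, h1⟩ ∧
  ∀ (n : ℕ) (M : Fin n → Fin n → V), PosOverV M → PosOverV fun k l => φ (M k l)

/-- A linear map from a matricial operator system `V` into a C*-algebra `B` is unital
completely positive. -/
def IsUCPVB (h1 : (1 : Matrix (Fin d) (Fin d) ℂ) ∈ V) (θ : V →ₗ[ℂ] B) : Prop :=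
  θ ⟨1, h1⟩ = 1 ∧
  ∀ (n : ℕ) (M : Fin n → Fin n → V), PosOverV M →
    PosOverB (Matrix.of fun k l => θ (M k l))

/-- A linear map on a C*-algebra `B` is unital completely positive. -/
def IsUCPBB (ψ : B →ₗ[ℂ] B) : Prop :=
  ψ 1 = 1 ∧
  ∀ (n : ℕ) (x : Matrix (Fin n) (Fin n) B), PosOverB x → PosOverB (x.map ⇑ψ)

/-- `i : V → B` is a unital complete order embedding: it is unital and for every `n`, an
`n × n` matrix over `V` is positive iff its entrywise image under `i` is positive. -/
def IsUCOEmbedding (h1 : (1 : Matrix (Fin d) (Fin d) ℂ) ∈ V) (i : V →ₗ[ℂ] B) : Prop :=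
  (i ⟨1, h1⟩ = 1) ∧
  ∀ (n : ℕ) (M : Fin n → Fin n → V),
    PosOverV M ↔ PosOverB (Matrix.of fun k l => i (M k l))

/-- `i : V → B` has the extension property: every UCP map `θ : V → B` extends to a UCP map
on all of `B` through `i`. -/
def HasExtensionProperty (h1 : (1 : Matrix (Fin d) (Fin d) ℂ) ∈ V) (i : V →ₗ[ℂ] B) : Prop :=
  ∀ θ : V →ₗ[ℂ] B, IsUCPVB V B h1 θ →
    ∃ Θ : B →ₗ[ℂ] B, IsUCPBB B Θ ∧ ∀ v : V, Θ (i v) = θ v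

/-- `i : V → B` is rigid: the only UCP map on `B` fixing the image of `i` is the identity. -/
def IsRigid (i : V →ₗ[ℂ] B) : Prop :=
  ∀ ψ : B →ₗ[ℂ] B, IsUCPBB B ψ → (∀ v : V, ψ (i v) = i v) → ψ = LinearMap.id

end Defs

section AuxB

variable {B : Type*} [NormedRing B] [StarRing B] [CStarRing B] [NormedAlgebra ℂ B]
  [CompleteSpace B] [StarModule ℂ B]

lemma aux_ucp_map_pos {ψ : B →ₗ[ℂ] B} (hψ : IsUCPBB B ψ) {b c : B} (h : b = star c * c) :
    ∃ e : B, ψ b = star e * e := by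
  have hx : PosOverB (Matrix.of (fun _ _ => b) : Matrix (Fin 1) (Fin 1) B) := by
    refine ⟨Matrix.of fun _ _ => c, ?_⟩
    ext i j
    simp [Matrix.mul_apply, Matrix.star_apply, h]
  obtain ⟨y, hy⟩ := hψ.2 1 _ hx
  refine ⟨y 0 0, ?_⟩
  have h2 := congrFun (congrFun hy 0) 0
  simpa [Matrix.mul_apply, Matrix.star_apply, Matrix.map_apply] using h2

lemma aux_nonneg_factor : ∀ (x : B),
    (letI : CStarAlgebra B := ⟨⟩
     letI : PartialOrder B := CStarAlgebra.spectralOrder B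
     letI : StarOrderedRing B := CStarAlgebra.spectralOrderedRing B
     0 ≤ x) → ∃ c : B, x = star c * c := by
  letI : CStarAlgebra B := ⟨⟩
  letI : PartialOrder B := CStarAlgebra.spectralOrder B
  letI : StarOrderedRing B := CStarAlgebra.spectralOrderedRing B
  intro x hx
  exact ⟨CFC.sqrt x, by
    rw [(IsSelfAdjoint.of_nonneg (CFC.sqrt_nonneg x)).star_eq, CFC.sqrt_mul_sqrt_self x hx]⟩

lemma aux_ucp_selfadjoint_bound {ψ : B →ₗ[ℂ] B} (hψ : IsUCPBB B ψ) {a : B}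
    (ha : IsSelfAdjoint a) : ‖ψ a‖ ≤ 3 * ‖a‖ * ‖(1 : B)‖ := by
  letI : CStarAlgebra B := ⟨⟩
  letI : PartialOrder B := CStarAlgebra.spectralOrder B
  letI : StarOrderedRing B := CStarAlgebra.spectralOrderedRing B
  have hpos : ∀ x : B, 0 ≤ x → 0 ≤ ψ x := by
    intro x hx
    obtain ⟨c, hc⟩ := aux_nonneg_factor x hx
    obtain ⟨e, he⟩ := aux_ucp_map_pos hψ hc
    rw [he]; exact star_mul_self_nonneg e
  set p : B := a + algebraMap ℝ B ‖a‖ with hp_def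
  have hp : 0 ≤ p := by
    have := ha.neg_algebraMap_norm_le_self
    have h' := sub_nonneg.mpr this
    rwa [sub_neg_eq_add] at h'
  have hq : p ≤ algebraMap ℝ B (2 * ‖a‖) := by
    have h1 : a ≤ algebraMap ℝ B ‖a‖ := ha.le_algebraMap_norm_self
    have : algebraMap ℝ B (2 * ‖a‖) - p = algebraMap ℝ B ‖a‖ - a := by
      rw [hp_def, two_mul, map_add]; abel
    have h2 := sub_nonneg.mpr h1
    rw [← sub_nonneg, this]; exact h2
  have hsmul : ∀ r : ℝ, ψ (algebraMap ℝ B r) = algebraMap ℝ B r := by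
    intro r
    have : algebraMap ℝ B r = (r : ℂ) • (1 : B) := by
      rw [Algebra.algebraMap_eq_smul_one]
      rw [← algebraMap_smul ℂ r (1 : B)]
      norm_num
    rw [this, map_smul, hψ.1]
  have hψp_le : ψ p ≤ algebraMap ℝ B (2 * ‖a‖) := by
    have h0 : 0 ≤ ψ (algebraMap ℝ B (2 * ‖a‖) - p) := hpos _ (sub_nonneg.mpr hq)
    rw [map_sub, hsmul] at h0
    exact sub_nonneg.mp h0
  have hψp_norm : ‖ψ p‖ ≤ 2 * ‖a‖ * ‖(1 : B)‖ := by
    have := CStarAlgebra.norm_le_norm_of_nonneg_of_le (hpos p hp) hψp_le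
    refine this.trans ?_
    rw [Algebra.algebraMap_eq_smul_one, norm_smul, Real.norm_eq_abs,
      abs_of_nonneg (by positivity)]
  have hψa : ψ a = ψ p - algebraMap ℝ B ‖a‖ := by
    rw [hp_def, map_add, hsmul]; abel
  rw [hψa]
  calc ‖ψ p - algebraMap ℝ B ‖a‖‖ ≤ ‖ψ p‖ + ‖algebraMap ℝ B ‖a‖‖ := norm_sub_le _ _
    _ ≤ 2 * ‖a‖ * ‖(1 : B)‖ + ‖a‖ * ‖(1 : B)‖ := by
        gcongr
        rw [Algebra.algebraMap_eq_smul_one, norm_smul, Real.norm_eq_abs,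
          abs_of_nonneg (norm_nonneg a)]
    _ = 3 * ‖a‖ * ‖(1 : B)‖ := by ring

lemma aux_ucp_apply_bound {ψ : B →ₗ[ℂ] B} (hψ : IsUCPBB B ψ) (b : B) :
    ‖ψ b‖ ≤ (6 * ‖(1 : B)‖) * ‖b‖ := by
  set h : B := (1/2 : ℂ) • (b + star b) with hh_def
  set k : B := (-(Complex.I/2)) • (b - star b) with hk_def
  have hb : b = h + Complex.I • k := by
    rw [hh_def, hk_def, smul_smul]
    have : Complex.I * -(Complex.I/2) = 1/2 := by
      linear_combination (-1/2 : ℂ) * Complex.I_mul_I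
    rw [this, smul_sub, smul_add]
    module
  have hsh : IsSelfAdjoint h := by
    rw [hh_def]
    rw [IsSelfAdjoint, star_smul, star_add, star_star, RCLike.star_def]
    have h2 : (starRingEnd ℂ) (1/2) = 1/2 := by
      rw [one_div, map_inv₀, map_ofNat]
    rw [h2, add_comm]
  have hsk : IsSelfAdjoint k := by
    rw [hk_def]
    rw [IsSelfAdjoint, star_smul, star_sub, star_star, RCLike.star_def]
    have : (starRingEnd ℂ) (-(Complex.I/2)) = Complex.I/2 := by
      rw [map_neg, map_div₀, Complex.conj_I]
      rw [map_ofNat, neg_div, neg_neg]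
    rw [this]
    module
  have hnh : ‖h‖ ≤ ‖b‖ := by
    rw [hh_def, norm_smul]
    calc ‖(1/2 : ℂ)‖ * ‖b + star b‖ ≤ ‖(1/2 : ℂ)‖ * (‖b‖ + ‖star b‖) := by
          gcongr; exact norm_add_le _ _
      _ = ‖b‖ := by rw [norm_star]; norm_num; ring
  have hnk : ‖k‖ ≤ ‖b‖ := by
    rw [hk_def, norm_smul]
    calc ‖(-(Complex.I/2) : ℂ)‖ * ‖b - star b‖ ≤ ‖(-(Complex.I/2) : ℂ)‖ * (‖b‖ + ‖star b‖) := by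
          gcongr; exact norm_sub_le _ _
      _ = ‖b‖ := by
          rw [norm_star, norm_neg]
          simp [norm_div, Complex.norm_I]
          ring
  calc ‖ψ b‖ = ‖ψ h + Complex.I • ψ k‖ := by
        conv_lhs => rw [hb]
        rw [map_add, LinearMap.map_smul ψ Complex.I k]
    _ ≤ ‖ψ h‖ + ‖Complex.I • ψ k‖ := norm_add_le _ _
    _ = ‖ψ h‖ + ‖ψ k‖ := by rw [norm_smul, Complex.norm_I, one_mul]
    _ ≤ 3 * ‖h‖ * ‖(1:B)‖ + 3 * ‖k‖ * ‖(1:B)‖ :=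
        add_le_add (aux_ucp_selfadjoint_bound hψ hsh) (aux_ucp_selfadjoint_bound hψ hsk)
    _ ≤ 3 * ‖b‖ * ‖(1:B)‖ + 3 * ‖b‖ * ‖(1:B)‖ := by gcongr
    _ = (6 * ‖(1 : B)‖) * ‖b‖ := by ring

lemma aux_ucp_id : IsUCPBB B LinearMap.id := by
  refine ⟨rfl, fun n x hx => ?_⟩
  simpa [Matrix.map_id] using hx

lemma aux_ucp_comp {ψ χ : B →ₗ[ℂ] B} (hψ : IsUCPBB B ψ) (hχ : IsUCPBB B χ) :
    IsUCPBB B (ψ.comp χ) := by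
  refine ⟨by simp [hχ.1, hψ.1], fun n x hx => ?_⟩
  have : x.map ⇑(ψ.comp χ) = (x.map ⇑χ).map ⇑ψ := by
    rw [Matrix.map_map]; rfl
  rw [this]
  exact hψ.2 n _ (hχ.2 n x hx)

variable [FiniteDimensional ℂ B]

lemma aux_posOverB_limit {n : ℕ} (z : ℕ → Matrix (Fin n) (Fin n) B)
    (hz : ∀ m, PosOverB (z m)) (x : Matrix (Fin n) (Fin n) B)
    (hlim : ∀ i j, Filter.Tendsto (fun m => z m i j) Filter.atTop (nhds (x i j))) :
    PosOverB x := by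
  letI : CStarAlgebra B := ⟨⟩
  letI : PartialOrder B := CStarAlgebra.spectralOrder B
  letI : StarOrderedRing B := CStarAlgebra.spectralOrderedRing B
  choose y hy using hz
  have hyentry : ∀ m (i j : Fin n), z m i j = ∑ l, star (y m l i) * y m l j := by
    intro m i j
    rw [hy m]
    simp [Matrix.mul_apply, Matrix.star_apply]
  have hbd : ∀ i j : Fin n, ∃ R : ℝ, ∀ m, ‖z m i j‖ ≤ R := by
    intro i j
    obtain ⟨R, hR⟩ := ((hlim i j).norm.bddAbove_range)
    exact ⟨R, fun m => hR ⟨m, rfl⟩⟩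
  choose R hR using hbd
  set R0 : ℝ := ∑ p : Fin n × Fin n, |R p.1 p.2| with hR0
  have hRle : ∀ i j m, ‖z m i j‖ ≤ R0 := by
    intro i j m
    refine (hR i j m).trans ?_
    calc R i j ≤ |R i j| := le_abs_self _
      _ ≤ R0 := Finset.single_le_sum (f := fun p : Fin n × Fin n => |R p.1 p.2|)
          (fun p _ => abs_nonneg _) (Finset.mem_univ (i, j))
  have hybd : ∀ m (i j : Fin n), ‖y m i j‖ ≤ Real.sqrt R0 := by
    intro m i j
    have hterm : star (y m i j) * y m i j ≤ z m j j := by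
      rw [hyentry m j j]
      exact Finset.single_le_sum (f := fun l => star (y m l j) * y m l j)
        (fun l _ => star_mul_self_nonneg _) (Finset.mem_univ i)
    have h1 : ‖star (y m i j) * y m i j‖ ≤ R0 :=
      (CStarAlgebra.norm_le_norm_of_nonneg_of_le (star_mul_self_nonneg _) hterm).trans
        (hRle j j m)
    rw [CStarRing.norm_star_mul_self] at h1
    have h2 : ‖y m i j‖ ^ 2 ≤ R0 := by rw [sq]; exact h1
    calc ‖y m i j‖ = Real.sqrt (‖y m i j‖ ^ 2) := (Real.sqrt_sq (norm_nonneg _)).symm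
      _ ≤ Real.sqrt R0 := Real.sqrt_le_sqrt h2
  set P := Fin n → Fin n → B with hP
  haveI : ProperSpace P := FiniteDimensional.proper ℂ P
  have hcpt : IsCompact (Metric.closedBall (0 : P) (Real.sqrt R0)) :=
    isCompact_closedBall _ _
  have hmem : ∀ m, (fun i j => y m i j : P) ∈ Metric.closedBall (0 : P) (Real.sqrt R0) := by
    intro m
    rw [Metric.mem_closedBall, dist_zero_right]
    refine (pi_norm_le_iff_of_nonneg (Real.sqrt_nonneg _)).mpr fun i => ?_
    exact (pi_norm_le_iff_of_nonneg (Real.sqrt_nonneg _)).mpr fun j => hybd m i j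
  obtain ⟨Y, -, φ, hφ, hYt⟩ := hcpt.tendsto_subseq hmem
  have hYe : ∀ i j, Filter.Tendsto (fun m => y (φ m) i j) Filter.atTop (nhds (Y i j)) := by
    intro i j
    have h1 := (tendsto_pi_nhds.mp hYt) i
    exact (tendsto_pi_nhds.mp h1) j
  refine ⟨Matrix.of fun i j => Y i j, ?_⟩
  ext i j
  have t1 : Filter.Tendsto (fun m => z (φ m) i j) Filter.atTop (nhds (x i j)) :=
    (hlim i j).comp hφ.tendsto_atTop
  have t2 : Filter.Tendsto (fun m => z (φ m) i j) Filter.atTop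
      (nhds (∑ l, star (Y l i) * Y l j)) := by
    have : ∀ m, z (φ m) i j = ∑ l, star (y (φ m) l i) * y (φ m) l j := fun m =>
      hyentry (φ m) i j
    simp only [this]
    exact tendsto_finset_sum _ fun l _ => ((hYe l i).star.mul (hYe l j))
  have := tendsto_nhds_unique t1 t2
  rw [this]
  simp [Matrix.mul_apply, Matrix.star_apply]

lemma aux_isClosed_ucp :
    IsClosed {ψ : B →L[ℂ] B | IsUCPBB B (ψ : B →ₗ[ℂ] B)} := by
  have hset : {ψ : B →L[ℂ] B | IsUCPBB B (ψ : B →ₗ[ℂ] B)} =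
      {ψ : B →L[ℂ] B | ψ 1 = 1} ∩
      ⋂ (n : ℕ), ⋂ (x : Matrix (Fin n) (Fin n) B), ⋂ (_ : PosOverB x),
        {ψ : B →L[ℂ] B | PosOverB (x.map ⇑ψ)} := by
    ext ψ
    simp only [Set.mem_setOf_eq, Set.mem_inter_iff, Set.mem_iInter, IsUCPBB,
      ContinuousLinearMap.coe_coe]
  rw [hset]
  refine IsClosed.inter ?_ ?_
  · exact isClosed_eq (continuous_id.eval_const 1) continuous_const
  refine isClosed_iInter fun n => isClosed_iInter fun x => isClosed_iInter fun hx => ?_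
  refine IsSeqClosed.isClosed ?_
  intro ψm ψ hmem hlim
  exact aux_posOverB_limit (fun m => x.map ⇑(ψm m)) hmem (x.map ⇑ψ)
    (fun i j => hlim.eval_const (x i j))

end AuxB

/-- **Extension of semigroups** (Theorem 3.2): any operator-norm continuous unital completely
positive one-parameter semigroup on a matricial operator system `V` extends, through a rigid
unital complete order embedding with the extension property `i : V → B` into a
finite-dimensional C*-algebra `B`, to a continuous UCP semigroup on `B`. -/
theorem extension_of_ucp_semigroups
    {d : ℕ} (V : Submodule ℂ (Matrix (Fin d) (Fin d) ℂ))
    (h1 : (1 : Matrix (Fin d) (Fin d) ℂ) ∈ V)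
    (hstar : ∀ v ∈ V, v.conjTranspose ∈ V)
    (B : Type*) [NormedRing B] [StarRing B] [CStarRing B] [NormedAlgebra ℂ B]
    [CompleteSpace B] [StarModule ℂ B] [FiniteDimensional ℂ B]
    (i : V →ₗ[ℂ] B)
    (hemb : IsUCOEmbedding V B h1 i)
    (hext : HasExtensionProperty V B h1 i)
    (hrig : IsRigid V B i)
    (Φ : ℝ≥0 → (V →ₗ[ℂ] V))
    (hΦ0 : Φ 0 = LinearMap.id)
    (hΦadd : ∀ s t : ℝ≥0, Φ (s + t) = (Φ s).comp (Φ t))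
    (hΦucp : ∀ t : ℝ≥0, IsUCPVV V h1 (Φ t))
    (hΦcont : Continuous fun t : ℝ≥0 => LinearMap.toContinuousLinearMap (Φ t)) :
    ∃ Ψ : ℝ≥0 → (B →ₗ[ℂ] B),
      Ψ 0 = LinearMap.id ∧
      (∀ s t : ℝ≥0, Ψ (s + t) = (Ψ s).comp (Ψ t)) ∧
      (∀ t : ℝ≥0, IsUCPBB B (Ψ t)) ∧
      Continuous (fun t : ℝ≥0 => LinearMap.toContinuousLinearMap (Ψ t)) ∧
      ∀ (t : ℝ≥0) (v : V), Ψ t (i v) = i (Φ t v) := by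
  classical
  haveI : FiniteDimensional ℂ (B →L[ℂ] B) :=
    (LinearMap.toContinuousLinearMap : (B →ₗ[ℂ] B) ≃ₗ[ℂ] (B →L[ℂ] B)).finiteDimensional
  haveI : ProperSpace (B →L[ℂ] B) := FiniteDimensional.proper ℂ (B →L[ℂ] B)
  set C : ℝ := 6 * ‖(1 : B)‖ with hC_def
  have hC0 : (0 : ℝ) ≤ C := by positivity
  set U : Set (B →L[ℂ] B) := {ψ | IsUCPBB B (ψ : B →ₗ[ℂ] B)} with hU_def
  have hUcl : IsClosed U := aux_isClosed_ucp
  have hUnorm : ∀ ψ ∈ U, ‖ψ‖ ≤ C := fun ψ hψ =>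
    ContinuousLinearMap.opNorm_le_bound ψ hC0 (fun b => aux_ucp_apply_bound hψ b)
  set K : Set (B →L[ℂ] B) := Metric.closedBall 0 C ∩ U with hK_def
  have hUK : U ⊆ K := fun ψ hψ =>
    ⟨by rw [Metric.mem_closedBall, dist_zero_right]; exact hUnorm ψ hψ, hψ⟩
  have hKcpt : IsCompact K := (isCompact_closedBall 0 C).inter_right hUcl
  set E : ℝ≥0 → Set (B →L[ℂ] B) :=
    fun t => {ψ | ψ ∈ U ∧ ∀ v : V, ψ (i v) = i (Φ t v)} with hE_def
  -- continuity facts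
  have hicont : Continuous i := LinearMap.continuous_of_finiteDimensional i
  have hiv : ∀ v : V, Continuous fun t : ℝ≥0 => i (Φ t v) := by
    intro v
    have h1 : Continuous fun t : ℝ≥0 => (LinearMap.toContinuousLinearMap (Φ t)) v :=
      hΦcont.eval_const v
    have h2 : (fun t : ℝ≥0 => (LinearMap.toContinuousLinearMap (Φ t)) v)
        = fun t => Φ t v := by
      funext t; simp
    rw [h2] at h1
    exact hicont.comp h1
  -- each E t is nonempty, by the extension property
  have hene : ∀ t : ℝ≥0, ∃ ψ, ψ ∈ E t := by
    intro t
    have hvb : IsUCPVB V B h1 (i.comp (Φ t)) := by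
      constructor
      · show i (Φ t ⟨1, h1⟩) = 1
        rw [(hΦucp t).1]; exact hemb.1
      · intro n M hM
        exact (hemb.2 n fun k l => Φ t (M k l)).mp ((hΦucp t).2 n M hM)
    obtain ⟨Θ, hΘucp, hΘfix⟩ := hext _ hvb
    refine ⟨LinearMap.toContinuousLinearMap Θ, ?_, ?_⟩
    · show IsUCPBB B _
      rw [LinearMap.coe_toContinuousLinearMap]
      exact hΘucp
    · intro v
      show (LinearMap.toContinuousLinearMap Θ) (i v) = _
      rw [LinearMap.coe_toContinuousLinearMap']
      exact hΘfix v
  have hEone : (1 : B →L[ℂ] B) ∈ E 0 := by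
    constructor
    · show IsUCPBB B ((1 : B →L[ℂ] B) : B →ₗ[ℂ] B)
      have : ((1 : B →L[ℂ] B) : B →ₗ[ℂ] B) = LinearMap.id := by ext b; rfl
      rw [this]; exact aux_ucp_id
    · intro v
      show i v = i (Φ 0 v)
      rw [hΦ0]; rfl
  have hErig : ∀ ψ ∈ E 0, ψ = (1 : B →L[ℂ] B) := by
    intro ψ hψ
    have hfix : ∀ v : V, (ψ : B →ₗ[ℂ] B) (i v) = i v := by
      intro v
      have := hψ.2 v
      rw [hΦ0] at this
      exact this
    have h := hrig _ hψ.1 hfix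
    ext b
    have := LinearMap.ext_iff.mp h b
    simpa using this
  have hEmul : ∀ {a b : ℝ≥0} {ψ χ : B →L[ℂ] B},
      ψ ∈ E a → χ ∈ E b → ψ * χ ∈ E (a + b) := by
    intro a b ψ χ hψ hχ
    constructor
    · show IsUCPBB B ((ψ * χ : B →L[ℂ] B) : B →ₗ[ℂ] B)
      have : ((ψ * χ : B →L[ℂ] B) : B →ₗ[ℂ] B)
          = (ψ : B →ₗ[ℂ] B).comp (χ : B →ₗ[ℂ] B) := by ext b'; rfl
      rw [this]
      exact aux_ucp_comp hψ.1 hχ.1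
    · intro v
      show ψ (χ (i v)) = i (Φ (a + b) v)
      rw [hχ.2 v, hψ.2 (Φ b v), hΦadd a b]
      rfl
  have hEpow : ∀ {τ : ℝ≥0} {ψ : B →L[ℂ] B}, ψ ∈ E τ →
      ∀ m : ℕ, ψ ^ m ∈ E ((m : ℝ≥0) * τ) := by
    intro τ ψ hψ m
    induction m with
    | zero => simpa using hEone
    | succ m ih =>
      have h := hEmul ih hψ
      rw [pow_succ] at *
      have heq : ((m : ℝ≥0) * τ + τ) = ((m + 1 : ℕ) : ℝ≥0) * τ := by
        push_cast; ring
      rwa [heq] at h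
  -- the sequence (m+1)⁻¹ tends to 0
  have htau : Filter.Tendsto (fun m : ℕ => ((m : ℝ≥0) + 1)⁻¹) Filter.atTop (nhds 0) := by
    rw [← NNReal.tendsto_coe]
    have := tendsto_one_div_add_atTop_nhds_zero_nat (𝕜 := ℝ)
    simpa [one_div] using this
  -- key rigidity estimate: maps in E t for small t are uniformly close to 1
  have hD : ∀ ε : ℝ, 0 < ε → ∃ δ : ℝ≥0, 0 < δ ∧
      ∀ t : ℝ≥0, t ≤ δ → ∀ ψ ∈ E t, ‖ψ - 1‖ < ε := by
    by_contra hcon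
    push_neg at hcon
    obtain ⟨ε, hε, hbad⟩ := hcon
    have hsel : ∀ m : ℕ, ∃ t : ℝ≥0, t ≤ ((m : ℝ≥0) + 1)⁻¹ ∧
        ∃ ψ, ψ ∈ E t ∧ ε ≤ ‖ψ - 1‖ := by
      intro m
      obtain ⟨t, ht, ψ, hψ, hn⟩ := hbad ((m : ℝ≥0) + 1)⁻¹ (by positivity)
      exact ⟨t, ht, ψ, hψ, hn⟩
    choose t ht ψs hψs hψn using hsel
    have hts : Filter.Tendsto t Filter.atTop (nhds 0) :=
      tendsto_of_tendsto_of_tendsto_of_le_of_le tendsto_const_nhds htau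
        (fun m => zero_le) ht
    have hmemK : ∀ m, ψs m ∈ K := fun m => hUK (hψs m).1
    obtain ⟨ψω, hψωK, φ, hφ, hlim⟩ := hKcpt.tendsto_subseq hmemK
    have hfix : ∀ v : V, ψω (i v) = i v := by
      intro v
      have e1 : Filter.Tendsto (fun m => ψs (φ m) (i v)) Filter.atTop (nhds (ψω (i v))) :=
        hlim.eval_const (i v)
      have e2 : Filter.Tendsto (fun m => ψs (φ m) (i v)) Filter.atTop (nhds (i v)) := by
        have heq : (fun m => ψs (φ m) (i v)) = fun m => i (Φ (t (φ m)) v) :=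
          funext fun m => (hψs (φ m)).2 v
        rw [heq]
        have h3 : Filter.Tendsto (fun m => t (φ m)) Filter.atTop (nhds 0) :=
          hts.comp hφ.tendsto_atTop
        have h4 := ((hiv v).tendsto 0).comp h3
        have h5 : i (Φ 0 v) = i v := by rw [hΦ0]; rfl
        rwa [h5] at h4
      exact tendsto_nhds_unique e1 e2
    have hψω1 : ψω = 1 := hErig ψω ⟨hψωK.2, fun v => by rw [hfix v, hΦ0]; rfl⟩
    have hnorm : Filter.Tendsto (fun m => ‖ψs (φ m) - 1‖) Filter.atTop (nhds ‖ψω - 1‖) :=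
      (hlim.sub tendsto_const_nhds).norm
    have hεle : ε ≤ ‖ψω - 1‖ :=
      ge_of_tendsto hnorm (Filter.Eventually.of_forall fun m => hψn (φ m))
    rw [hψω1, sub_self, norm_zero] at hεle
    linarith
  -- choose elements of E ((m+1)⁻¹)
  have hene' := fun m : ℕ => hene ((m : ℝ≥0) + 1)⁻¹
  choose Θ hΘ using hene'
  have hΘn : Filter.Tendsto (fun m => ‖Θ m - 1‖) Filter.atTop (nhds 0) := by
    rw [Metric.tendsto_atTop]
    intro ε hε
    obtain ⟨δ, hδ0, hδ⟩ := hD ε hε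
    have hev : ∀ᶠ m : ℕ in Filter.atTop, ((m : ℝ≥0) + 1)⁻¹ < δ :=
      htau.eventually_lt_const hδ0
    obtain ⟨N, hN⟩ := Filter.eventually_atTop.mp hev
    refine ⟨N, fun m hm => ?_⟩
    rw [Real.dist_eq, sub_zero, abs_of_nonneg (norm_nonneg _)]
    exact hδ _ (hN m hm).le _ (hΘ m)
  -- the discretized semigroup
  set F : ℕ → ℝ≥0 → (B →L[ℂ] B) :=
    fun m t => Θ m ^ (⌊t * ((m : ℝ≥0) + 1)⌋₊) with hF_def
  set sd : ℕ → ℝ≥0 → ℝ≥0 :=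
    fun m t => (⌊t * ((m : ℝ≥0) + 1)⌋₊ : ℝ≥0) * ((m : ℝ≥0) + 1)⁻¹ with hsd_def
  have hFE : ∀ m t, F m t ∈ E (sd m t) := fun m t => hEpow (hΘ m) _
  have hmne : ∀ m : ℕ, ((m : ℝ≥0) + 1) ≠ 0 := fun m => by positivity
  have hs1 : ∀ m t, sd m t ≤ t := by
    intro m t
    have h := Nat.floor_le (zero_le : (0 : ℝ≥0) ≤ t * ((m : ℝ≥0) + 1))
    calc sd m t ≤ (t * ((m : ℝ≥0) + 1)) * ((m : ℝ≥0) + 1)⁻¹ :=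
          mul_le_mul_left h _
      _ = t := by rw [mul_assoc, mul_inv_cancel₀ (hmne m), mul_one]
  have hs2 : ∀ m t, t ≤ sd m t + ((m : ℝ≥0) + 1)⁻¹ := by
    intro m t
    have h := (Nat.lt_floor_add_one (t * ((m : ℝ≥0) + 1))).le
    calc t = (t * ((m : ℝ≥0) + 1)) * ((m : ℝ≥0) + 1)⁻¹ := by
          rw [mul_assoc, mul_inv_cancel₀ (hmne m), mul_one]
      _ ≤ ((⌊t * ((m : ℝ≥0) + 1)⌋₊ : ℝ≥0) + 1) * ((m : ℝ≥0) + 1)⁻¹ :=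
          mul_le_mul_left h _
      _ = sd m t + ((m : ℝ≥0) + 1)⁻¹ := by rw [add_mul, one_mul]
  have hstend : ∀ t, Filter.Tendsto (fun m => sd m t) Filter.atTop (nhds t) := by
    intro t
    have hlow : Filter.Tendsto (fun m : ℕ => t - ((m : ℝ≥0) + 1)⁻¹)
        Filter.atTop (nhds t) := by
      have := Filter.Tendsto.sub (tendsto_const_nhds (x := t)
        (f := Filter.atTop (α := ℕ))) htau
      simpa using this
    exact tendsto_of_tendsto_of_tendsto_of_le_of_le hlow tendsto_const_nhds
      (fun m => tsub_le_iff_right.mpr (hs2 m t)) (fun m => hs1 m t)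
  -- the ultrafilter limit
  let Ufl : Ultrafilter ℕ := Ultrafilter.of Filter.atTop
  have hUfl : (Ufl : Filter ℕ) ≤ Filter.atTop := Ultrafilter.of_le _
  have hKlim : ∀ t : ℝ≥0, ∃ ψ, ψ ∈ K ∧
      Filter.Tendsto (fun m => F m t) (Ufl : Filter ℕ) (nhds ψ) := by
    intro t
    have hmem : ∀ m, F m t ∈ K := fun m => hUK (hFE m t).1
    have hle : (Ufl.map (fun m => F m t) : Filter (B →L[ℂ] B)) ≤ Filter.principal K := by
      rw [Filter.le_principal_iff]
      exact Filter.mem_map.mpr (Filter.univ_mem' hmem)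
    obtain ⟨ψ, hψK, hψle⟩ := hKcpt.ultrafilter_le_nhds (Ufl.map fun m => F m t) hle
    exact ⟨ψ, hψK, hψle⟩
  choose Ψ0 hΨ0K hΨ0lim using hKlim
  have hΨU : ∀ t, Ψ0 t ∈ U := fun t =>
    hUcl.mem_of_tendsto (hΨ0lim t) (Filter.Eventually.of_forall fun m => (hFE m t).1)
  have hΨfix : ∀ (t : ℝ≥0) (v : V), Ψ0 t (i v) = i (Φ t v) := by
    intro t v
    refine tendsto_nhds_unique ((hΨ0lim t).eval_const (i v)) ?_
    have heq : (fun m => F m t (i v)) = fun m => i (Φ (sd m t) v) :=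
      funext fun m => (hFE m t).2 v
    rw [heq]
    exact (((hiv v).tendsto t).comp (hstend t)).mono_left hUfl
  have hΨE : ∀ t, Ψ0 t ∈ E t := fun t => ⟨hΨU t, hΨfix t⟩
  -- semigroup property
  have hΨsemi : ∀ a b : ℝ≥0, Ψ0 (a + b) = Ψ0 a * Ψ0 b := by
    intro a b
    have hdiff : ∀ m, ‖F m (a + b) - F m a * F m b‖ ≤ C * ‖Θ m - 1‖ := by
      intro m
      set p := ⌊a * ((m : ℝ≥0) + 1)⌋₊ with hp_def
      set q := ⌊b * ((m : ℝ≥0) + 1)⌋₊ with hq_def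
      set r := ⌊(a + b) * ((m : ℝ≥0) + 1)⌋₊ with hr_def
      have hpq : p + q ≤ r := by
        apply Nat.le_floor
        push_cast
        rw [add_mul]
        exact add_le_add (Nat.floor_le (by positivity)) (Nat.floor_le (by positivity))
      have hr2 : r ≤ p + q + 1 := by
        have hlt : (a + b) * ((m : ℝ≥0) + 1) < ((p + q + 2 : ℕ) : ℝ≥0) := by
          push_cast
          rw [add_mul]
          calc a * ((m : ℝ≥0) + 1) + b * ((m : ℝ≥0) + 1)
              < ((p : ℝ≥0) + 1) + ((q : ℝ≥0) + 1) :=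
                add_lt_add (Nat.lt_floor_add_one _) (Nat.lt_floor_add_one _)
            _ = (p : ℝ≥0) + (q : ℝ≥0) + 2 := by ring
        have := (Nat.floor_lt (by positivity)).mpr hlt
        omega
      have hcase : r = p + q ∨ r = p + q + 1 := by omega
      rcases hcase with hcase | hcase
      · have : F m (a + b) = F m a * F m b := by
          show Θ m ^ r = Θ m ^ p * Θ m ^ q
          rw [hcase, pow_add]
        rw [this, sub_self, norm_zero]
        positivity
      · have h2 : F m (a + b) - F m a * F m b = Θ m ^ (p + q) * (Θ m - 1) := by
          show Θ m ^ r - Θ m ^ p * Θ m ^ q = _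
          rw [hcase, pow_succ, ← pow_add, mul_sub, mul_one]
        rw [h2]
        calc ‖Θ m ^ (p + q) * (Θ m - 1)‖ ≤ ‖Θ m ^ (p + q)‖ * ‖Θ m - 1‖ :=
              norm_mul_le _ _
          _ ≤ C * ‖Θ m - 1‖ := by
              have hmem : Θ m ^ (p + q) ∈ U := (hEpow (hΘ m) (p + q)).1
              exact mul_le_mul_of_nonneg_right (hUnorm _ hmem) (norm_nonneg _)
    have h0 : Filter.Tendsto (fun m => F m (a + b) - F m a * F m b)
        Filter.atTop (nhds 0) := by
      refine squeeze_zero_norm hdiff ?_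
      have := hΘn.const_mul C
      simpa using this
    have h1 : Filter.Tendsto (fun m => F m (a + b) - F m a * F m b)
        (Ufl : Filter ℕ) (nhds (Ψ0 (a + b) - Ψ0 a * Ψ0 b)) :=
      (hΨ0lim (a + b)).sub ((hΨ0lim a).mul (hΨ0lim b))
    have h2 := tendsto_nhds_unique h1 (h0.mono_left hUfl)
    exact sub_eq_zero.mp h2
  have hΨ1 : Ψ0 0 = 1 := hErig _ (hΨE 0)
  -- continuity
  have hΨcont : Continuous Ψ0 := by
    rw [Metric.continuous_iff]
    intro t ε hε
    have hC1 : (0 : ℝ) < C + 1 := by linarith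
    obtain ⟨δ, hδ0, hδ⟩ := hD (ε / (C + 1)) (by positivity)
    refine ⟨(δ : ℝ), by exact_mod_cast hδ0, ?_⟩
    intro t' ht'
    have key : ∀ u u' : ℝ≥0, u ≤ u' → u' - u ≤ δ → dist (Ψ0 u') (Ψ0 u) < ε := by
      intro u u' huu hsub
      have he : Ψ0 u' = Ψ0 u * Ψ0 (u' - u) := by
        rw [← hΨsemi u (u' - u), add_tsub_cancel_of_le huu]
      rw [dist_eq_norm, he]
      have he2 : Ψ0 u * Ψ0 (u' - u) - Ψ0 u = Ψ0 u * (Ψ0 (u' - u) - 1) := by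
        rw [mul_sub, mul_one]
      rw [he2]
      have hfrac : C * (ε / (C + 1)) < ε := by
        have h3 : C / (C + 1) < 1 := (div_lt_one hC1).mpr (lt_add_one C)
        calc C * (ε / (C + 1)) = (C / (C + 1)) * ε := by ring
          _ < 1 * ε := mul_lt_mul_of_pos_right h3 hε
          _ = ε := one_mul ε
      calc ‖Ψ0 u * (Ψ0 (u' - u) - 1)‖ ≤ ‖Ψ0 u‖ * ‖Ψ0 (u' - u) - 1‖ := norm_mul_le _ _
        _ ≤ C * ‖Ψ0 (u' - u) - 1‖ :=
            mul_le_mul_of_nonneg_right (hUnorm _ (hΨU u)) (norm_nonneg _)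
        _ ≤ C * (ε / (C + 1)) :=
            mul_le_mul_of_nonneg_left (hδ _ hsub _ (hΨE _)).le hC0
        _ < ε := hfrac
    rcases le_total t t' with h | h
    · refine key t t' h ?_
      have hd : ((t' - t : ℝ≥0) : ℝ) = (t' : ℝ) - (t : ℝ) := NNReal.coe_sub h
      have : ((t' - t : ℝ≥0) : ℝ) ≤ (δ : ℝ) := by
        rw [hd]
        rw [NNReal.dist_eq] at ht'
        calc (t' : ℝ) - (t : ℝ) ≤ |(t' : ℝ) - (t : ℝ)| := le_abs_self _
          _ ≤ (δ : ℝ) := ht'.le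
      exact_mod_cast this
    · rw [dist_comm]
      refine key t' t h ?_
      have hd : ((t - t' : ℝ≥0) : ℝ) = (t : ℝ) - (t' : ℝ) := NNReal.coe_sub h
      have : ((t - t' : ℝ≥0) : ℝ) ≤ (δ : ℝ) := by
        rw [hd]
        rw [NNReal.dist_eq] at ht'
        calc (t : ℝ) - (t' : ℝ) ≤ |(t' : ℝ) - (t : ℝ)| := by
              rw [abs_sub_comm]; exact le_abs_self _
          _ ≤ (δ : ℝ) := ht'.le
      exact_mod_cast this
  -- conclusion
  refine ⟨fun t => (Ψ0 t : B →ₗ[ℂ] B), ?_, ?_, fun t => hΨU t, ?_, fun t v => hΨfix t v⟩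
  · show ((Ψ0 0 : B →L[ℂ] B) : B →ₗ[ℂ] B) = LinearMap.id
    rw [hΨ1]; ext b; rfl
  · intro a b
    show ((Ψ0 (a + b) : B →L[ℂ] B) : B →ₗ[ℂ] B) = _
    rw [hΨsemi a b]; ext b'; rfl
  · show Continuous fun t : ℝ≥0 => LinearMap.toContinuousLinearMap ((Ψ0 t : B →ₗ[ℂ] B))
    have hfun : (fun t : ℝ≥0 => LinearMap.toContinuousLinearMap ((Ψ0 t : B →ₗ[ℂ] B)))
        = Ψ0 := by
      funext t; ext b; simp
    rw [hfun]
    exact hΨcont
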